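/- arXiv:1503.02105 — 4 statements merged into one kernel-verified Lean document; each statement's English description precedes it below -/
import Mathlib

section
/- Let G be a graph whose components are: at most one isolated vertex, and otherwise complete multipartite graphs each with at least three parts, where at most one part has exactly one vertex and all other parts have at least three vertices. Then G is paw-induced-saturated. -/
open SimpleGraph

/-- `G` contains an induced copy of `H`. -/
def HasInducedCopy {W V : Type*} (H : SimpleGraph W) (G : SimpleGraph V) : Prop :=
  Nonempty (H ↪g G)

/-- `G` is `H`-induced-saturated: `G` has no induced copy of `H`, but deleting any edge
or adding any non-edge creates an induced copy of `H`. -/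
def IsIndSat {V W : Type*} (G : SimpleGraph V) (H : SimpleGraph W) : Prop :=
  ¬ HasInducedCopy H G ∧
  (∀ u v : V, G.Adj u v → HasInducedCopy H (G.deleteEdges {s(u, v)})) ∧
  (∀ u v : V, u ≠ v → ¬ G.Adj u v →
    HasInducedCopy H (G ⊔ SimpleGraph.fromEdgeSet {s(u, v)}))

/-- The paw: a triangle `{0,1,2}` with pendant vertex `3` attached to `2`. -/
def paw : SimpleGraph (Fin 4) :=
  SimpleGraph.fromEdgeSet {s((0 : Fin 4), 1), s(0, 2), s(1, 2), s(2, 3)}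

lemma hasPaw {V : Type*} {G : SimpleGraph V} {a b c d : V}
    (hab : G.Adj a b) (hac : G.Adj a c) (hbc : G.Adj b c) (hcd : G.Adj c d)
    (had : ¬ G.Adj a d) (hbd : ¬ G.Adj b d) (hnad : a ≠ d) (hnbd : b ≠ d) :
    HasInducedCopy paw G := by
  have hnab := hab.ne
  have hnac := hac.ne
  have hnbc := hbc.ne
  have hncd := hcd.ne
  refine ⟨⟨⟨![a,b,c,d], ?_⟩, ?_⟩⟩
  · intro i j h
    fin_cases i <;> fin_cases j <;> simp_all
  · intro i j
    fin_cases i <;> fin_cases j <;>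
      simp only [Matrix.cons_val_zero, Matrix.cons_val_one, Matrix.head_cons,
        Matrix.cons_val_two, Matrix.tail_cons, Matrix.cons_val_three, Matrix.head_fin_const,
        Fin.isValue] <;>
      first
        | (exact iff_of_true (by first | assumption | exact hab.symm | exact hac.symm | exact hbc.symm | exact hcd.symm) (by rw [paw, fromEdgeSet_adj]; simp [Sym2.eq_iff]))
        | (exact iff_of_false (by first | exact G.irrefl | assumption | exact fun h => had h.symm | exact fun h => hbd h.symm) (by rw [paw, fromEdgeSet_adj]; simp [Sym2.eq_iff]))

lemma exists_third {α : Type*} {s : Set α} (hf : s.Finite) (h3 : 3 ≤ s.ncard) (a b : α) :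
    ∃ c ∈ s, c ≠ a ∧ c ≠ b := by
  by_contra h
  push_neg at h
  have hsub : s ⊆ {a, b} := by
    intro x hx
    by_cases hxa : x = a
    · exact Or.inl hxa
    · exact Or.inr (h x hx hxa)
  have h1 := Set.ncard_le_ncard hsub ((Set.finite_singleton b).insert a)
  have h2 : ({a, b} : Set α).ncard ≤ 2 :=
    le_trans (Set.ncard_insert_le a {b}) (by simp)
  omega

/-- A graph whose components are at most one isolated vertex and otherwise
complete multipartite graphs with at least three parts, at most one part of size exactly one
and all other parts of size at least three, is paw-induced-saturated.  The component and part
structure is encoded by maps `comp` and `part` with adjacency iff same component and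
different part. -/
theorem paw_construction_isIndSat {V : Type*} [Fintype V] (G : SimpleGraph V)
    {ι κ : Type*} (comp : V → ι) (part : V → κ)
    (hadj : ∀ u v : V, G.Adj u v ↔ comp u = comp v ∧ part u ≠ part v)
    (hiso : {v : V | ∀ u, ¬ G.Adj v u}.Subsingleton)
    (hparts : ∀ i : ι, (∃ v w : V, v ≠ w ∧ comp v = i ∧ comp w = i) →
      3 ≤ {p : κ | ∃ v, comp v = i ∧ part v = p}.ncard)
    (hone : ∀ i : ι, {p : κ | {v : V | comp v = i ∧ part v = p}.ncard = 1}.ncard ≤ 1)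
    (hsize : ∀ (i : ι) (p : κ), {v : V | comp v = i ∧ part v = p}.ncard ≠ 2) :
    IsIndSat G paw := by
  classical
  have hSfin : ∀ i : ι, ({p : κ | ∃ v, comp v = i ∧ part v = p}).Finite := fun i =>
    (Set.finite_range part).subset (by rintro p ⟨x, _, rfl⟩; exact ⟨x, rfl⟩)
  refine ⟨?_, ?_, ?_⟩
  · -- no induced paw
    rintro ⟨f⟩
    have h01 : G.Adj (f 0) (f 1) :=
      f.map_rel_iff.mpr (by rw [paw, fromEdgeSet_adj]; simp [Sym2.eq_iff])
    have h02 : G.Adj (f 0) (f 2) :=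
      f.map_rel_iff.mpr (by rw [paw, fromEdgeSet_adj]; simp [Sym2.eq_iff])
    have h23 : G.Adj (f 2) (f 3) :=
      f.map_rel_iff.mpr (by rw [paw, fromEdgeSet_adj]; simp [Sym2.eq_iff])
    have n03 : ¬ G.Adj (f 0) (f 3) := fun h => by
      have := f.map_rel_iff.mp h
      rw [paw, fromEdgeSet_adj] at this
      simp [Sym2.eq_iff] at this
    have n13 : ¬ G.Adj (f 1) (f 3) := fun h => by
      have := f.map_rel_iff.mp h
      rw [paw, fromEdgeSet_adj] at this
      simp [Sym2.eq_iff] at this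
    rw [hadj] at h01 h02 h23
    have c03 : comp (f 0) = comp (f 3) := h02.1.trans h23.1
    have c13 : comp (f 1) = comp (f 3) := h01.1.symm.trans c03
    have p03 : part (f 0) = part (f 3) := by
      by_contra hp; exact n03 ((hadj _ _).mpr ⟨c03, hp⟩)
    have p13 : part (f 1) = part (f 3) := by
      by_contra hp; exact n13 ((hadj _ _).mpr ⟨c13, hp⟩)
    exact h01.2 (p03.trans p13.symm)
  · -- delete an edge
    intro u v huv
    obtain ⟨hcuv, hpuv⟩ := (hadj u v).mp huv
    have hnuv : u ≠ v := huv.ne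
    have hS3 : 3 ≤ ({p : κ | ∃ x, comp x = comp u ∧ part x = p}).ncard :=
      hparts _ ⟨u, v, hnuv, rfl, hcuv.symm⟩
    obtain ⟨p, ⟨w, hwc, hwp⟩, hp1, hp2⟩ := exists_third (hSfin (comp u)) hS3 (part u) (part v)
    subst hwp
    have hwu : w ≠ u := fun h => hp1 (by rw [h])
    have hwv : w ≠ v := fun h => hp2 (by rw [h])
    have hadjD : ∀ a b : V,
        (G.deleteEdges {s(u,v)}).Adj a b ↔ G.Adj a b ∧ ¬ s(a,b) = s(u,v) := by
      intro a b; rw [deleteEdges_adj]; simp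
    by_cases hA : ∃ x, x ≠ u ∧ comp x = comp u ∧ part x = part u
    · obtain ⟨x, hxu, hxc, hxp⟩ := hA
      have hxv : x ≠ v := fun h => hpuv (by rw [← hxp, h])
      have hxw : x ≠ w := fun h => hp1 (by rw [← h, hxp])
      have a_xv : G.Adj x v := (hadj _ _).mpr ⟨hxc.trans hcuv, by rw [hxp]; exact hpuv⟩
      have a_xw : G.Adj x w :=
        (hadj _ _).mpr ⟨hxc.trans hwc.symm, by rw [hxp]; exact fun h => hp1 h.symm⟩
      have a_vw : G.Adj v w :=
        (hadj _ _).mpr ⟨hcuv.symm.trans hwc.symm, fun h => hp2 h.symm⟩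
      have a_wu : G.Adj w u := (hadj _ _).mpr ⟨hwc, hp1⟩
      refine hasPaw (G := G.deleteEdges {s(u,v)}) (a := x) (b := v) (c := w) (d := u)
        ?_ ?_ ?_ ?_ ?_ ?_ hxu (Ne.symm hnuv)
      · exact (hadjD x v).mpr ⟨a_xv, by simp [Sym2.eq_iff, hxu, hxv]⟩
      · exact (hadjD x w).mpr ⟨a_xw, by simp [Sym2.eq_iff, hxu, hxv]⟩
      · exact (hadjD v w).mpr ⟨a_vw, by simp [Sym2.eq_iff, Ne.symm hnuv, hwu]⟩
      · exact (hadjD w u).mpr ⟨a_wu, by simp [Sym2.eq_iff, hwu, hwv]⟩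
      · intro h
        exact ((hadj x u).mp ((hadjD x u).mp h).1).2 hxp
      · intro h
        exact ((hadjD v u).mp h).2 (Sym2.eq_swap)
    · by_cases hB : ∃ x, x ≠ v ∧ comp x = comp u ∧ part x = part v
      · obtain ⟨x, hxv, hxc, hxp⟩ := hB
        have hxu : x ≠ u := fun h => hpuv (by rw [← hxp, h])
        have hxw : x ≠ w := fun h => hp2 (by rw [← h, hxp])
        have a_xu : G.Adj x u :=
          (hadj _ _).mpr ⟨hxc, by rw [hxp]; exact fun h => hpuv h.symm⟩
        have a_xw : G.Adj x w :=
          (hadj _ _).mpr ⟨hxc.trans hwc.symm, by rw [hxp]; exact fun h => hp2 h.symm⟩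
        have a_uw : G.Adj u w := (hadj _ _).mpr ⟨hwc.symm, fun h => hp1 h.symm⟩
        have a_wv : G.Adj w v :=
          (hadj _ _).mpr ⟨hwc.trans hcuv, hp2⟩
        refine hasPaw (G := G.deleteEdges {s(u,v)}) (a := x) (b := u) (c := w) (d := v)
          ?_ ?_ ?_ ?_ ?_ ?_ hxv hnuv
        · exact (hadjD x u).mpr ⟨a_xu, by simp [Sym2.eq_iff, hxu, hxv]⟩
        · exact (hadjD x w).mpr ⟨a_xw, by simp [Sym2.eq_iff, hxu, hxv]⟩
        · exact (hadjD u w).mpr ⟨a_uw, by simp [Sym2.eq_iff, hwv, hwu]⟩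
        · exact (hadjD w v).mpr ⟨a_wv, by simp [Sym2.eq_iff, hwu, hwv]⟩
        · intro h
          exact ((hadj x v).mp ((hadjD x v).mp h).1).2 hxp
        · intro h
          exact ((hadjD u v).mp h).2 rfl
      · exfalso
        push_neg at hA hB
        have hu1 : {x : V | comp x = comp u ∧ part x = part u} = {u} := by
          apply Set.eq_singleton_iff_unique_mem.mpr
          refine ⟨⟨rfl, rfl⟩, ?_⟩
          rintro x ⟨hxc, hxp⟩
          by_contra hxu
          exact hA x hxu hxc hxp
        have hv1 : {x : V | comp x = comp u ∧ part x = part v} = {v} := by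
          apply Set.eq_singleton_iff_unique_mem.mpr
          refine ⟨⟨hcuv.symm, rfl⟩, ?_⟩
          rintro x ⟨hxc, hxp⟩
          by_contra hxv
          exact hB x hxv hxc hxp
        have hTmem : ({part u, part v} : Set κ) ⊆
            {p : κ | {x : V | comp x = comp u ∧ part x = p}.ncard = 1} := by
          rintro q (rfl | rfl)
          · rw [Set.mem_setOf_eq, hu1, Set.ncard_singleton]
          · rw [Set.mem_setOf_eq, hv1, Set.ncard_singleton]
        have hTfin : ({p : κ | {x : V | comp x = comp u ∧ part x = p}.ncard = 1}).Finite := by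
          apply (Set.finite_range part).subset
          rintro q hq
          rw [Set.mem_setOf_eq] at hq
          obtain ⟨x, hx⟩ := Set.nonempty_of_ncard_ne_zero (s := {x : V | comp x = comp u ∧ part x = q}) (by omega)
          exact ⟨x, hx.2⟩
        have h2 := Set.ncard_le_ncard hTmem hTfin
        rw [Set.ncard_pair hpuv] at h2
        have := hone (comp u)
        omega
  · -- add a non-edge
    intro u v hnuv hnadj
    have hadjA : ∀ a b : V, (G ⊔ fromEdgeSet {s(u,v)}).Adj a b ↔
        G.Adj a b ∨ (s(a,b) = s(u,v) ∧ a ≠ b) := by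
      intro a b; simp [fromEdgeSet_adj]
    rw [hadj] at hnadj
    push_neg at hnadj
    by_cases hcc : comp u = comp v
    · have hpp : part u = part v := hnadj hcc
      have hS3 : 3 ≤ ({p : κ | ∃ x, comp x = comp u ∧ part x = p}).ncard :=
        hparts _ ⟨u, v, hnuv, rfl, hcc.symm⟩
      obtain ⟨p, ⟨a, hac', hap⟩, hp1, -⟩ :=
        exists_third (hSfin (comp u)) hS3 (part u) (part u)
      subst hap
      have hau : a ≠ u := fun h => hp1 (by rw [h])
      have hav : a ≠ v := fun h => hp1 (by rw [h, ← hpp])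
      set P := {x : V | comp x = comp u ∧ part x = part u} with hP
      have hPfin : P.Finite := Set.toFinite _
      have hP2 : 2 ≤ P.ncard := by
        have hsub : ({u, v} : Set V) ⊆ P := by
          rintro x (rfl | rfl)
          · exact ⟨rfl, rfl⟩
          · exact ⟨hcc.symm, hpp.symm⟩
        have := Set.ncard_le_ncard hsub hPfin
        rwa [Set.ncard_pair hnuv] at this
      have hP3 : 3 ≤ P.ncard := by
        have := hsize (comp u) (part u)
        rw [← hP] at this
        omega
      obtain ⟨w, ⟨hwc, hwp⟩, hwu, hwv⟩ := exists_third hPfin hP3 u v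
      have hwa : w ≠ a := fun h => hp1 (by rw [← h, hwp])
      refine hasPaw (G := G ⊔ fromEdgeSet {s(u,v)}) (a := u) (b := v) (c := a) (d := w)
        ?_ ?_ ?_ ?_ ?_ ?_ (Ne.symm hwu) (Ne.symm hwv)
      · exact (hadjA u v).mpr (Or.inr ⟨rfl, hnuv⟩)
      · exact (hadjA u a).mpr (Or.inl ((hadj _ _).mpr ⟨hac'.symm, fun h => hp1 h.symm⟩))
      · exact (hadjA v a).mpr (Or.inl ((hadj _ _).mpr
          ⟨hcc.symm.trans hac'.symm, by rw [← hpp]; exact fun h => hp1 h.symm⟩))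
      · exact (hadjA a w).mpr (Or.inl ((hadj _ _).mpr
          ⟨hac'.trans hwc.symm, by rw [hwp]; exact hp1⟩))
      · intro h
        rcases (hadjA u w).mp h with h' | ⟨h', -⟩
        · exact ((hadj u w).mp h').2 hwp.symm
        · rw [Sym2.eq_iff] at h'
          rcases h' with ⟨-, rfl⟩ | ⟨rfl, -⟩
          · exact hwv rfl
          · exact hnuv rfl
      · intro h
        rcases (hadjA v w).mp h with h' | ⟨h', -⟩
        · exact ((hadj v w).mp h').2 (by rw [hwp, hpp])
        · rw [Sym2.eq_iff] at h'
          rcases h' with ⟨rfl, -⟩ | ⟨-, rfl⟩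
          · exact hnuv rfl
          · exact hwu rfl
    · -- different components
      have key : ∀ x y : V, comp x ≠ comp y → (∃ w, G.Adj y w) →
          HasInducedCopy paw (G ⊔ fromEdgeSet {s(x,y)}) := by
        intro x y hxy ⟨w0, hyw0⟩
        have hnxy : x ≠ y := fun h => hxy (by rw [h])
        have hc0 : comp y = comp w0 := ((hadj y w0).mp hyw0).1
        have hS3 : 3 ≤ ({p : κ | ∃ z, comp z = comp y ∧ part z = p}).ncard :=
          hparts _ ⟨y, w0, hyw0.ne, rfl, hc0.symm⟩
        obtain ⟨p1, ⟨a, hac', hap⟩, hp1, -⟩ :=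
          exists_third (hSfin (comp y)) hS3 (part y) (part y)
        obtain ⟨p2, ⟨b, hbc', hbp⟩, hq1, hq2⟩ :=
          exists_third (hSfin (comp y)) hS3 (part y) p1
        subst hap; subst hbp
        have hay : a ≠ y := fun h => hp1 (by rw [h])
        have hby : b ≠ y := fun h => hq1 (by rw [h])
        have hab : a ≠ b := fun h => hq2 (by rw [← h])
        have hax : a ≠ x := fun h => hxy (by rw [← h, hac'])
        have hbx : b ≠ x := fun h => hxy (by rw [← h, hbc'])
        have hadjB : ∀ c d : V, (G ⊔ fromEdgeSet {s(x,y)}).Adj c d ↔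
            G.Adj c d ∨ (s(c,d) = s(x,y) ∧ c ≠ d) := by
          intro c d; simp [fromEdgeSet_adj]
        refine hasPaw (G := G ⊔ fromEdgeSet {s(x,y)}) (a := a) (b := b) (c := y) (d := x)
          ?_ ?_ ?_ ?_ ?_ ?_ hax hbx
        · exact (hadjB a b).mpr (Or.inl ((hadj _ _).mpr
            ⟨hac'.trans hbc'.symm, fun h => hq2 h.symm⟩))
        · exact (hadjB a y).mpr (Or.inl ((hadj _ _).mpr ⟨hac', hp1⟩))
        · exact (hadjB b y).mpr (Or.inl ((hadj _ _).mpr ⟨hbc', hq1⟩))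
        · exact (hadjB y x).mpr (Or.inr ⟨Sym2.eq_swap, Ne.symm hnxy⟩)
        · intro h
          rcases (hadjB a x).mp h with h' | ⟨h', -⟩
          · exact hxy (((hadj a x).mp h').1.symm.trans hac')
          · rw [Sym2.eq_iff] at h'
            rcases h' with ⟨rfl, -⟩ | ⟨rfl, h''⟩
            · exact hax rfl
            · exact hay rfl
        · intro h
          rcases (hadjB b x).mp h with h' | ⟨h', -⟩
          · exact hxy (((hadj b x).mp h').1.symm.trans hbc')
          · rw [Sym2.eq_iff] at h'
            rcases h' with ⟨rfl, -⟩ | ⟨rfl, h''⟩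
            · exact hbx rfl
            · exact hby rfl
      by_cases hv : ∃ w, G.Adj v w
      · exact key u v hcc hv
      · have hu : ∃ w, G.Adj u w := by
          by_contra hu
          push_neg at hu hv
          exact hnuv (hiso (Set.mem_setOf_eq ▸ hu) (Set.mem_setOf_eq ▸ hv))
        have := key v u (Ne.symm hcc) hu
        rwa [Sym2.eq_swap] at this
end

section
/- If G is a paw-induced-saturated graph, then every edge of G lies in a triangle. -/
open SimpleGraph

lemma paw_adj_iff (i j : Fin 4) : paw.Adj i j ↔
    ((i = 0 ∧ j = 1) ∨ (i = 1 ∧ j = 0) ∨ (i = 0 ∧ j = 2) ∨ (i = 2 ∧ j = 0) ∨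
     (i = 1 ∧ j = 2) ∨ (i = 2 ∧ j = 1) ∨ (i = 2 ∧ j = 3) ∨ (i = 3 ∧ j = 2)) := by
  simp only [paw, fromEdgeSet_adj, Set.mem_insert_iff, Set.mem_singleton_iff, Sym2.eq_iff]
  revert i j
  decide

lemma paw_nonadj (i j : Fin 4) (h1 : ¬ paw.Adj i j) (h2 : i ≠ j) :
    paw.Adj i 2 ∧ paw.Adj j 2 := by
  rw [paw_adj_iff] at h1 ⊢
  rw [show (paw.Adj j 2) ↔ _ from paw_adj_iff j 2]
  fin_cases i <;> fin_cases j <;> simp_all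

/-- In a paw-induced-saturated graph every edge lies in a triangle. -/
theorem paw_indSat_edge_in_triangle {V : Type*} (G : SimpleGraph V)
    (h : IsIndSat G paw) :
    ∀ u v : V, G.Adj u v → ∃ w : V, G.Adj u w ∧ G.Adj v w := by
  intro u v huv
  by_contra hcon
  push_neg at hcon
  obtain ⟨f⟩ := h.2.1 u v huv
  by_cases hc : ∃ i j : Fin 4, ¬ paw.Adj i j ∧ i ≠ j ∧ s(f i, f j) = s(u, v)
  · obtain ⟨i, j, hnij, hij, hs⟩ := hc
    obtain ⟨hi2, hj2⟩ := paw_nonadj i j hnij hij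
    have hAi : G.Adj (f i) (f 2) := (deleteEdges_adj.1 (f.map_adj_iff.2 hi2)).1
    have hAj : G.Adj (f j) (f 2) := (deleteEdges_adj.1 (f.map_adj_iff.2 hj2)).1
    rcases Sym2.eq_iff.1 hs with ⟨hiu, hjv⟩ | ⟨hiv, hju⟩
    · rw [hiu] at hAi; rw [hjv] at hAj; exact hcon (f 2) hAi hAj
    · rw [hiv] at hAi; rw [hju] at hAj; exact hcon (f 2) hAj hAi
  · push_neg at hc
    refine h.1 ⟨⟨f.toEmbedding, ?_⟩⟩
    intro a b
    show G.Adj (f a) (f b) ↔ paw.Adj a b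
    constructor
    · intro hG
      by_contra hnp
      have hab : a ≠ b := fun e => hG.ne (by rw [e])
      have := hc a b hnp hab
      exact hnp (f.map_adj_iff.1 (deleteEdges_adj.2 ⟨hG, by simpa using this⟩))
    · intro hp
      exact (deleteEdges_adj.1 (f.map_adj_iff.2 hp)).1
end

section
/- For k ≥ 2, the Cartesian product of k copies of K_3 contains no induced copy of the star K_{1,k+1}. -/
open SimpleGraph

/-- The star `K_{1,m}` with center `0` and `m` leaves. -/
def starGraph (m : ℕ) : SimpleGraph (Fin (m + 1)) :=
  SimpleGraph.fromRel (fun i _ => i = 0)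

/-- The Cartesian product of `k` copies of `K₃`: vertices are functions `Fin k → Fin 3`,
adjacent iff they differ in exactly one coordinate. -/
def rook3 (k : ℕ) : SimpleGraph (Fin k → Fin 3) :=
  SimpleGraph.fromRel (fun x y => (Finset.univ.filter fun i => x i ≠ y i).card = 1)

/-- For `k ≥ 2`, the Cartesian product of `k` copies of `K₃` contains no
induced copy of the star `K_{1,k+1}`. -/
theorem rook3_no_induced_star (k : ℕ) (hk : 2 ≤ k) :
    ¬ HasInducedCopy (_root_.starGraph (k + 1)) (rook3 k) := by
  rintro ⟨f⟩
  have hadj : ∀ j : Fin (k+1), (rook3 k).Adj (f 0) (f j.succ) := by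
    intro j
    rw [f.map_adj_iff]
    exact ⟨(Fin.succ_ne_zero j).symm, Or.inl rfl⟩
  have hcard : ∀ j : Fin (k+1),
      (Finset.univ.filter fun i => f 0 i ≠ f j.succ i).card = 1 := by
    intro j
    have h := hadj j
    simp only [rook3, SimpleGraph.fromRel_adj] at h
    rcases h.2 with h' | h'
    · exact h'
    · have heq : (Finset.filter (fun i => f 0 i ≠ f j.succ i) Finset.univ) =
          Finset.filter (fun i => f j.succ i ≠ f 0 i) Finset.univ := by
        ext i; simp [ne_comm]
      rw [heq]; exact h'
  choose c hc using fun j => Finset.card_eq_one.mp (hcard j)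
  have hnotinj : ¬ Function.Injective c := by
    intro hinj
    have := Fintype.card_le_of_injective c hinj
    simp only [Fintype.card_fin] at this; omega
  rw [Function.not_injective_iff] at hnotinj
  obtain ⟨j1, j2, hcc, hne⟩ := hnotinj
  have hoff : ∀ i, i ≠ c j1 → f j1.succ i = f j2.succ i := by
    intro i hi
    have h1 : f 0 i = f j1.succ i := by
      by_contra h
      have hmem : i ∈ Finset.univ.filter fun i => f 0 i ≠ f j1.succ i := by simp [h]
      rw [hc j1] at hmem; simp at hmem; exact hi hmem
    have h2 : f 0 i = f j2.succ i := by
      by_contra h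
      have hmem : i ∈ Finset.univ.filter fun i => f 0 i ≠ f j2.succ i := by simp [h]
      rw [hc j2, ← hcc] at hmem; simp at hmem; exact hi hmem
    rw [← h1, ← h2]
  have hne' : f j1.succ ≠ f j2.succ := fun h =>
    hne (Fin.succ_injective _ (f.injective h))
  have hfilter : (Finset.univ.filter fun i => f j1.succ i ≠ f j2.succ i) = {c j1} := by
    apply Finset.eq_singleton_iff_nonempty_unique_mem.mpr
    constructor
    · rw [Finset.filter_nonempty_iff]
      by_contra h
      push_neg at h
      exact hne' (funext fun i => by simpa using h i (Finset.mem_univ i))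
    · intro i hi
      simp only [Finset.mem_filter] at hi
      by_contra h
      exact hi.2 (hoff i h)
  have hadj12 : (rook3 k).Adj (f j1.succ) (f j2.succ) := by
    simp only [rook3, SimpleGraph.fromRel_adj]
    exact ⟨hne', Or.inl (by rw [Finset.card_eq_one]; exact ⟨c j1, hfilter⟩)⟩
  rw [f.map_adj_iff, _root_.starGraph, SimpleGraph.fromRel_adj] at hadj12
  rcases hadj12.2 with h | h
  · exact Fin.succ_ne_zero j1 h
  · exact Fin.succ_ne_zero j2 h
end

section
/- For k ≥ 2, the Cartesian product of k copies of K_3 is K_{1,k+1}-induced-saturated: it contains no induced K_{1,k+1}, but adding any non-edge or deleting any edge creates an induced K_{1,k+1}. -/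
open SimpleGraph Finset

lemma fin3_add_one_ne (a : Fin 3) : a + 1 ≠ a := by revert a; decide
lemma fin3_third {a b : Fin 3} (h : a ≠ b) : -(a+b) ≠ a ∧ -(a+b) ≠ b := by
  revert h; revert a b; decide

lemma rook3_adj {k : ℕ} {x y : Fin k → Fin 3} :
    (rook3 k).Adj x y ↔ (Finset.univ.filter fun i => x i ≠ y i).card = 1 := by
  have hsymm : (Finset.univ.filter fun i => y i ≠ x i)
      = (Finset.univ.filter fun i => x i ≠ y i) := by
    ext m; simp [ne_comm]
  rw [rook3, fromRel_adj, hsymm, or_self]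
  constructor
  · exact fun h => h.2
  · intro h
    refine ⟨?_, h⟩
    rintro rfl
    simp at h

lemma rook3_adj_of {k : ℕ} {x y : Fin k → Fin 3} (a : Fin k) (ha : x a ≠ y a)
    (h : ∀ m, m ≠ a → x m = y m) : (rook3 k).Adj x y := by
  rw [rook3_adj]
  have he : (Finset.univ.filter fun i => x i ≠ y i) = {a} := by
    ext m
    simp only [mem_filter, mem_univ, true_and, mem_singleton]
    constructor
    · intro hm; by_contra hma; exact hm (h m hma)
    · rintro rfl; exact ha
  rw [he, card_singleton]

lemma rook3_not_adj {k : ℕ} {x y : Fin k → Fin 3} (a b : Fin k) (hab : a ≠ b)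
    (ha : x a ≠ y a) (hb : x b ≠ y b) : ¬ (rook3 k).Adj x y := by
  rw [rook3_adj]
  intro h
  have hsub : ({a, b} : Finset (Fin k)) ⊆ Finset.univ.filter fun i => x i ≠ y i := by
    intro m hm
    simp only [mem_insert, mem_singleton] at hm
    simp only [mem_filter, mem_univ, true_and]
    rcases hm with rfl | rfl <;> assumption
  have := Finset.card_le_card hsub
  rw [h, Finset.card_insert_of_notMem (by simpa using hab), card_singleton] at this
  omega

lemma starGraph_adj {m : ℕ} {a b : Fin (m+1)} :
    (_root_.starGraph m).Adj a b ↔ a ≠ b ∧ (a = 0 ∨ b = 0) := by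
  rw [_root_.starGraph, fromRel_adj]

lemma star_embed {V : Type*} (G : SimpleGraph V) (m : ℕ) (c : V) (L : Fin m → V)
    (hinjL : Function.Injective L) (hneL : ∀ i, L i ≠ c)
    (hadj : ∀ i, G.Adj c (L i)) (hnon : ∀ i j, i ≠ j → ¬ G.Adj (L i) (L j)) :
    HasInducedCopy (_root_.starGraph m) G := by
  have hLc : ∀ i, c ≠ L i := fun i h => hneL i h.symm
  refine ⟨⟨⟨Fin.cases c L, ?_⟩, ?_⟩⟩
  · intro a b
    induction a using Fin.cases with
    | zero =>
      induction b using Fin.cases with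
      | zero => intro _; rfl
      | succ j => simp only [Fin.cases_zero, Fin.cases_succ]; exact fun h => absurd h (hLc j)
    | succ i =>
      induction b using Fin.cases with
      | zero => simp only [Fin.cases_zero, Fin.cases_succ]; exact fun h => absurd h (hneL i)
      | succ j =>
        simp only [Fin.cases_succ]
        intro h
        exact congrArg Fin.succ (hinjL h)
  · intro a b
    induction a using Fin.cases with
    | zero =>
      induction b using Fin.cases with
      | zero => simp [_root_.starGraph_adj]
      | succ j =>
        simp only [Fin.cases_zero, Fin.cases_succ, _root_.starGraph_adj]
        exact iff_of_true (hadj j) ⟨(Fin.succ_ne_zero j).symm, Or.inl trivial⟩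
    | succ i =>
      induction b using Fin.cases with
      | zero =>
        simp only [Fin.cases_zero, Fin.cases_succ, _root_.starGraph_adj]
        exact iff_of_true (hadj i).symm ⟨Fin.succ_ne_zero i, Or.inr trivial⟩
      | succ j =>
        simp only [Fin.cases_succ, _root_.starGraph_adj]
        constructor
        · intro h
          by_cases hij : i = j
          · subst hij; exact absurd h (G.irrefl)
          · exact absurd h (hnon i j hij)
        · rintro ⟨-, h | h⟩
          · exact absurd h (Fin.succ_ne_zero i)
          · exact absurd h (Fin.succ_ne_zero j)

lemma rook3_no_copy (k : ℕ) : ¬ HasInducedCopy (_root_.starGraph (k+1)) (rook3 k) := by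
  rintro ⟨f⟩
  have hadj : ∀ i : Fin (k+1), (rook3 k).Adj (f 0) (f i.succ) := by
    intro i
    apply f.map_rel_iff.mpr
    rw [_root_.starGraph_adj]
    exact ⟨(Fin.succ_ne_zero i).symm, Or.inl rfl⟩
  have hcard : ∀ i : Fin (k+1),
      ∃ a, (Finset.univ.filter fun m => f 0 m ≠ f i.succ m) = {a} := by
    intro i
    exact Finset.card_eq_one.mp (rook3_adj.mp (hadj i))
  choose d hd using hcard
  have hmem : ∀ (i : Fin (k+1)) (m : Fin k), f 0 m ≠ f i.succ m ↔ m = d i := by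
    intro i m
    rw [← Finset.mem_singleton, ← hd i]
    simp
  have hinj : Function.Injective d := by
    intro i j hij
    by_contra hne
    have hij' : i.succ ≠ j.succ := fun h => hne (Fin.succ_injective _ h)
    have hfne : f i.succ ≠ f j.succ := fun h => hij' (f.injective h)
    have heq : ∀ m, m ≠ d i → f i.succ m = f j.succ m := by
      intro m hm
      have h1 : f 0 m = f i.succ m := by
        by_contra h'; exact hm ((hmem i m).mp h')
      have h2 : f 0 m = f j.succ m := by
        by_contra h'; exact hm (hij ▸ (hmem j m).mp h')
      rw [← h1, h2]
    have hdne : f i.succ (d i) ≠ f j.succ (d i) := by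
      intro h
      apply hfne
      funext m
      by_cases hm : m = d i
      · rw [hm]; exact h
      · exact heq m hm
    have : (rook3 k).Adj (f i.succ) (f j.succ) := rook3_adj_of (d i) hdne heq
    have := (_root_.starGraph_adj.mp (f.map_rel_iff.mp this)).2
    rcases this with h | h
    · exact Fin.succ_ne_zero i h
    · exact Fin.succ_ne_zero j h
  have := Fintype.card_le_of_injective d hinj
  simp at this

lemma rook3_del (k : ℕ) (u v : Fin k → Fin 3) (huv : (rook3 k).Adj u v) :
    HasInducedCopy (_root_.starGraph (k+1)) ((rook3 k).deleteEdges {s(u, v)}) := by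
  obtain ⟨i, hi⟩ := Finset.card_eq_one.mp (rook3_adj.mp huv)
  have hmem : ∀ m, u m ≠ v m ↔ m = i := by
    intro m; rw [← Finset.mem_singleton, ← hi]; simp
  have hio : u i ≠ v i := (hmem i).mpr rfl
  have hagree : ∀ m, m ≠ i → u m = v m := fun m hm => by
    by_contra h'; exact hm ((hmem m).mp h')
  obtain ⟨h3u, h3v⟩ := fin3_third hio
  set t : Fin 3 := -(u i + v i) with ht
  set w : Fin k → Fin 3 := Function.update u i t with hw
  have hwi : w i = t := Function.update_self i t u
  have hwm : ∀ m, m ≠ i → w m = u m := fun m hm => Function.update_of_ne hm t u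
  set y : Fin k → (Fin k → Fin 3) :=
    fun j => if j = i then u else Function.update w j (w j + 1) with hy
  -- coordinate facts for y
  have hy_self : y i = u := by rw [hy]; simp
  have hy_eq : ∀ j, j = i → y j = u := fun j hj => hj ▸ hy_self
  have hyi : ∀ j, j ≠ i → y j i = t := by
    intro j hj; rw [hy]; simp only [if_neg hj]
    rw [Function.update_of_ne (fun h => hj h.symm), hwi]
  have hyj : ∀ j, j ≠ i → y j j = w j + 1 := by
    intro j hj; rw [hy]; simp only [if_neg hj, Function.update_self]
  have hym : ∀ j, j ≠ i → ∀ m, m ≠ j → y j m = w m := by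
    intro j hj m hm; rw [hy]; simp only [if_neg hj]
    exact Function.update_of_ne hm _ _
  have hwu : w ≠ u := fun h => h3u (by rw [← hwi, h])
  have hwv : w ≠ v := fun h => h3v (by rw [← hwi, h])
  have huv' : u ≠ v := fun h => hio (congrFun h i)
  have hyu : ∀ j, j ≠ i → y j ≠ u := fun j hj h => h3u (by rw [← hyi j hj, h])
  have hyv : ∀ j, j ≠ i → y j ≠ v := fun j hj h => h3v (by rw [← hyi j hj, h])
  have hyw : ∀ j, y j ≠ w := by
    intro j
    by_cases hj : j = i
    · subst hj; rw [hy_self]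
      exact fun h => h3u (by rw [← hwi, ← h])
    · exact fun h => fin3_add_one_ne (w j) (by rw [← hyj j hj, h])
  set L : Fin (k+1) → (Fin k → Fin 3) := Fin.snoc y v with hL
  have hLlast : L (Fin.last k) = v := by simp [hL]
  have hLcast : ∀ j : Fin k, L j.castSucc = y j := by intro j; simp [hL]
  -- adjacency in the original graph
  have hadjwv : (rook3 k).Adj w v := by
    refine rook3_adj_of i (by rw [hwi]; exact h3v) ?_
    intro m hm; rw [hwm m hm, hagree m hm]
  have hadjwu : (rook3 k).Adj w u := by
    refine rook3_adj_of i (by rw [hwi]; exact h3u) ?_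
    intro m hm; exact hwm m hm
  have hadjwy : ∀ j, j ≠ i → (rook3 k).Adj w (y j) := by
    intro j hj
    refine rook3_adj_of j (by rw [hyj j hj]; exact (fin3_add_one_ne (w j)).symm) ?_
    intro m hm; exact (hym j hj m hm).symm
  -- non-adjacency among leaves in the original graph
  have hnon_vy : ∀ j, j ≠ i → ¬ (rook3 k).Adj v (y j) := by
    intro j hj
    refine rook3_not_adj i j (fun h => hj h.symm) ?_ ?_
    · rw [hyi j hj]; exact fun h => h3v h.symm
    · rw [hyj j hj, ← hagree j hj, ← hwm j hj]
      exact (fin3_add_one_ne (w j)).symm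
  have hnon_uy : ∀ j, j ≠ i → ¬ (rook3 k).Adj u (y j) := by
    intro j hj
    refine rook3_not_adj i j (fun h => hj h.symm) ?_ ?_
    · rw [hyi j hj]; exact fun h => h3u h.symm
    · rw [hyj j hj, ← hwm j hj]
      exact (fin3_add_one_ne (w j)).symm
  have hnon_yy : ∀ j j', j ≠ i → j' ≠ i → j ≠ j' → ¬ (rook3 k).Adj (y j) (y j') := by
    intro j j' hj hj' hjj'
    refine rook3_not_adj j j' hjj' ?_ ?_
    · rw [hyj j hj, hym j' hj' j hjj']
      exact fin3_add_one_ne (w j)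
    · rw [hyj j' hj', hym j hj j' (fun h => hjj' h.symm)]
      exact (fin3_add_one_ne (w j')).symm
  -- adjacency in deleted graph
  have hdel : ∀ x z : Fin k → Fin 3, ((rook3 k).deleteEdges {s(u,v)}).Adj x z ↔
      (rook3 k).Adj x z ∧ s(x,z) ≠ s(u,v) := by
    intro x z; rw [deleteEdges_adj]; simp
  apply star_embed _ (k+1) w L
  · -- injective
    intro a b hab
    induction a using Fin.lastCases with
    | last =>
      induction b using Fin.lastCases with
      | last => rfl
      | cast j =>
        rw [hLlast, hLcast] at hab
        exfalso
        by_cases hj : j = i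
        · rw [hy_eq j hj] at hab; exact huv' hab.symm
        · exact hyv j hj hab.symm
    | cast j =>
      induction b using Fin.lastCases with
      | last =>
        rw [hLlast, hLcast] at hab
        exfalso
        by_cases hj : j = i
        · rw [hy_eq j hj] at hab; exact huv' hab
        · exact hyv j hj hab
      | cast j' =>
        rw [hLcast, hLcast] at hab
        congr 1
        by_contra hjj'
        by_cases hj : j = i
        · by_cases hj' : j' = i
          · exact hjj' (hj.trans hj'.symm)
          · rw [hy_eq j hj] at hab
            exact hyu j' hj' hab.symm
        · by_cases hj' : j' = i
          · rw [hy_eq j' hj'] at hab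
            exact hyu j hj hab
          · apply fin3_add_one_ne (w j)
            have := congrFun hab j
            rw [hyj j hj, hym j' hj' j hjj'] at this
            exact this
  · -- leaves ≠ center
    intro a
    induction a using Fin.lastCases with
    | last => rw [hLlast]; exact hwv.symm
    | cast j =>
      rw [hLcast]
      exact hyw j
  · -- center adjacent to all leaves
    intro a
    induction a using Fin.lastCases with
    | last =>
      rw [hLlast, hdel]
      refine ⟨hadjwv, ?_⟩
      intro hEq
      rcases Sym2.eq_iff.mp hEq with ⟨h1, -⟩ | ⟨h1, -⟩
      · exact hwu h1
      · exact hwv h1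
    | cast j =>
      rw [hLcast, hdel]
      by_cases hj : j = i
      · rw [hy_eq j hj]
        refine ⟨hadjwu, ?_⟩
        intro hEq
        rcases Sym2.eq_iff.mp hEq with ⟨h1, -⟩ | ⟨h1, -⟩
        · exact hwu h1
        · exact hwv h1
      · refine ⟨hadjwy j hj, ?_⟩
        intro hEq
        rcases Sym2.eq_iff.mp hEq with ⟨h1, -⟩ | ⟨h1, -⟩
        · exact hwu h1
        · exact hwv h1
  · -- leaves pairwise non-adjacent
    intro a b hab
    rw [hdel]
    rintro ⟨hGadj, hedge⟩
    induction a using Fin.lastCases with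
    | last =>
      induction b using Fin.lastCases with
      | last => exact hab rfl
      | cast j =>
        rw [hLlast, hLcast] at hGadj hedge
        by_cases hj : j = i
        · rw [hy_eq j hj] at hGadj hedge
          exact hedge (Sym2.eq_swap)
        · exact hnon_vy j hj hGadj
    | cast j =>
      induction b using Fin.lastCases with
      | last =>
        rw [hLlast, hLcast] at hGadj hedge
        by_cases hj : j = i
        · rw [hy_eq j hj] at hGadj hedge
          exact hedge rfl
        · exact hnon_vy j hj hGadj.symm
      | cast j' =>
        rw [hLcast, hLcast] at hGadj hedge
        have hjj' : j ≠ j' := fun h => hab (by rw [h])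
        by_cases hj : j = i
        · have hj' : j' ≠ i := fun h => hjj' (hj.trans h.symm)
          rw [hy_eq j hj] at hGadj
          exact hnon_uy j' hj' hGadj
        · by_cases hj' : j' = i
          · rw [hy_eq j' hj'] at hGadj
            exact hnon_uy j hj hGadj.symm
          · exact hnon_yy j j' hj hj' hjj' hGadj

lemma rook3_add (k : ℕ) (u v : Fin k → Fin 3) (hne : u ≠ v) (hnadj : ¬ (rook3 k).Adj u v) :
    HasInducedCopy (_root_.starGraph (k+1)) (rook3 k ⊔ SimpleGraph.fromEdgeSet {s(u, v)}) := by
  set S : Finset (Fin k) := Finset.univ.filter fun m => u m ≠ v m with hS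
  have hS2 : 1 < S.card := by
    rcases Function.ne_iff.mp hne with ⟨a, ha⟩
    have hpos : 0 < S.card := Finset.card_pos.mpr ⟨a, by simp [hS, ha]⟩
    have hne1 : S.card ≠ 1 := fun h => hnadj (rook3_adj.mpr h)
    omega
  have hSmem : ∀ m, m ∈ S ↔ u m ≠ v m := by intro m; simp [hS]
  set c : Fin k → Fin 3 := fun j => if u j = v j then u j + 1 else -(u j + v j) with hc
  have hcu : ∀ j, c j ≠ u j := by
    intro j; rw [hc]
    by_cases h : u j = v j
    · simp only [if_pos h]; exact fin3_add_one_ne (u j)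
    · simp only [if_neg h]; exact (fin3_third h).1
  have hcv : ∀ j, c j ≠ v j := by
    intro j; rw [hc]
    by_cases h : u j = v j
    · simp only [if_pos h]; rw [← h]; exact fin3_add_one_ne (u j)
    · simp only [if_neg h]; exact (fin3_third h).2
  set y : Fin k → (Fin k → Fin 3) := fun j => Function.update u j (c j) with hy
  have hyj : ∀ j, y j j = c j := by intro j; rw [hy]; simp
  have hym : ∀ j m, m ≠ j → y j m = u m := by
    intro j m hm; rw [hy]; exact Function.update_of_ne hm _ _
  have hyu : ∀ j, y j ≠ u := fun j h => hcu j (by rw [← hyj j, h])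
  have hyv : ∀ j, y j ≠ v := fun j h => hcv j (by rw [← hyj j, h])
  set L : Fin (k+1) → (Fin k → Fin 3) := Fin.snoc y v with hL
  have hLlast : L (Fin.last k) = v := by simp [hL]
  have hLcast : ∀ j : Fin k, L j.castSucc = y j := by intro j; simp [hL]
  set G' := rook3 k ⊔ SimpleGraph.fromEdgeSet {s(u, v)} with hG'
  have hadd : ∀ x z : Fin k → Fin 3, G'.Adj x z ↔
      (rook3 k).Adj x z ∨ (s(x,z) = s(u,v) ∧ x ≠ z) := by
    intro x z; rw [hG', sup_adj, fromEdgeSet_adj]; simp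
  -- non-adjacency facts in rook3
  have hnon_vy : ∀ j, ¬ (rook3 k).Adj v (y j) := by
    intro j
    obtain ⟨a, haS, haj⟩ := Finset.exists_mem_ne hS2 j
    refine rook3_not_adj j a (fun h => haj h.symm) ?_ ?_
    · rw [hyj j]; exact fun h => hcv j h.symm
    · rw [hym j a haj]; exact fun h => (hSmem a).mp haS h.symm
  have hnon_yy : ∀ j j', j ≠ j' → ¬ (rook3 k).Adj (y j) (y j') := by
    intro j j' hjj'
    refine rook3_not_adj j j' hjj' ?_ ?_
    · rw [hyj j, hym j' j hjj']; exact hcu j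
    · rw [hyj j', hym j j' (fun h => hjj' h.symm)]
      exact fun h => hcu j' h.symm
  apply star_embed _ (k+1) u L
  · -- injective
    intro a b hab
    induction a using Fin.lastCases with
    | last =>
      induction b using Fin.lastCases with
      | last => rfl
      | cast j => rw [hLlast, hLcast] at hab; exact absurd hab.symm (hyv j)
    | cast j =>
      induction b using Fin.lastCases with
      | last => rw [hLlast, hLcast] at hab; exact absurd hab (hyv j)
      | cast j' =>
        rw [hLcast, hLcast] at hab
        congr 1
        by_contra hjj'
        apply hcu j
        have := congrFun hab j
        rw [hyj j, hym j' j hjj'] at this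
        exact this
  · -- leaves ≠ center
    intro a
    induction a using Fin.lastCases with
    | last => rw [hLlast]; exact hne.symm
    | cast j => rw [hLcast]; exact hyu j
  · -- center adjacent to leaves
    intro a
    induction a using Fin.lastCases with
    | last =>
      rw [hLlast, hadd]
      exact Or.inr ⟨rfl, hne⟩
    | cast j =>
      rw [hLcast, hadd]
      refine Or.inl (rook3_adj_of j (fun h => hcu j (by rw [← hyj j, ← h])) ?_)
      intro m hm; exact (hym j m hm).symm
  · -- leaves pairwise non-adjacent
    intro a b hab
    rw [hadd]
    rintro (hGadj | ⟨hedge, -⟩)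
    · induction a using Fin.lastCases with
      | last =>
        induction b using Fin.lastCases with
        | last => exact hab rfl
        | cast j => rw [hLlast, hLcast] at hGadj; exact hnon_vy j hGadj
      | cast j =>
        induction b using Fin.lastCases with
        | last => rw [hLlast, hLcast] at hGadj; exact hnon_vy j hGadj.symm
        | cast j' =>
          rw [hLcast, hLcast] at hGadj
          exact hnon_yy j j' (fun h => hab (by rw [h])) hGadj
    · induction a using Fin.lastCases with
      | last =>
        induction b using Fin.lastCases with
        | last => exact hab rfl
        | cast j =>
          rw [hLlast, hLcast] at hedge
          rcases Sym2.eq_iff.mp hedge with ⟨h1, -⟩ | ⟨-, h2⟩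
          · exact hne h1.symm
          · exact hyu j h2
      | cast j =>
        induction b using Fin.lastCases with
        | last =>
          rw [hLlast, hLcast] at hedge
          rcases Sym2.eq_iff.mp hedge with ⟨h1, -⟩ | ⟨h1, -⟩
          · exact hyu j h1
          · exact hyv j h1
        | cast j' =>
          rw [hLcast, hLcast] at hedge
          rcases Sym2.eq_iff.mp hedge with ⟨h1, -⟩ | ⟨h1, -⟩
          · exact hyu j h1
          · exact hyv j h1

/-- For `k ≥ 2`, the Cartesian product of `k` copies of `K₃` is
`K_{1,k+1}`-induced-saturated. -/
theorem rook3_star_indSat (k : ℕ) (hk : 2 ≤ k) :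
    IsIndSat (rook3 k) (_root_.starGraph (k + 1)) :=
  ⟨rook3_no_copy k, fun u v huv => rook3_del k u v huv,
   fun u v hne hnadj => rook3_add k u v hne hnadj⟩
end
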